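/- Let M be a compact smooth manifold and E a smooth complex vector bundle of finite rank over M. Then there exist finitely many smooth global sections s₁, …, sₙ of E such that for every point x ∈ M the vectors s₁(x), …, sₙ(x) span the fiber E_x over ℂ. -/

import Mathlib

open Bundle Manifold
open scoped TensorProduct

local notation "∞" => (⊤ : ℕ∞)

noncomputable section

/-- Complex multiplication and addition are smooth over `ℝ`, so that the complex-valued smooth
functions on a real manifold form a (comm)ring. -/
instance : ContMDiffRing 𝓘(ℝ, ℂ) (⊤ : ℕ∞) ℂ where
  contMDiff_add := by
    rw [contMDiff_iff]
    refine ⟨continuous_add, fun x y => ?_⟩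
    simp only [mfld_simps, chartAt_self_eq]
    rw [contDiffOn_univ]
    exact contDiff_add
  contMDiff_mul := by
    rw [contMDiff_iff]
    refine ⟨continuous_mul, fun x y => ?_⟩
    simp only [mfld_simps, chartAt_self_eq]
    rw [contDiffOn_univ]
    exact contDiff_mul

variable {EM : Type*} [NormedAddCommGroup EM] [NormedSpace ℝ EM] [FiniteDimensional ℝ EM]
  {HM : Type*} [TopologicalSpace HM] {IM : ModelWithCorners ℝ EM HM}
  {M : Type*} [TopologicalSpace M] [ChartedSpace HM M] [IsManifold IM (⊤ : ℕ∞) M]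
  [T2Space M] [SecondCountableTopology M] [CompactSpace M]

variable {F : Type*} [NormedAddCommGroup F] [NormedSpace ℂ F] [FiniteDimensional ℂ F]
  {V : M → Type*} [TopologicalSpace (TotalSpace F V)]
  [∀ x, AddCommGroup (V x)] [∀ x, Module ℂ (V x)] [∀ x, TopologicalSpace (V x)]
  [FiberBundle F V] [VectorBundle ℂ F V] [VectorBundle ℝ F V] [ContMDiffVectorBundle (⊤ : ℕ∞) F V IM]

set_option linter.unusedSectionVars false in
/-- A smooth function times a constant local frame vector, cut off so that it is supported in the
base set of a trivialization, gives a smooth global section. -/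
theorem aux_smooth_section (e : Trivialization F (π F V)) [MemTrivializationAtlas e]
    (ρ : C^∞⟮IM, M; 𝓘(ℝ), ℝ⟯) (hρ : tsupport ρ ⊆ e.baseSet) (b : F) :
    ContMDiff IM (IM.prod 𝓘(ℝ, F)) ∞
      (fun x => TotalSpace.mk' F x (ρ x • e.symm x b)) := by
  intro x0
  by_cases hx : x0 ∈ e.baseSet
  · have hsrc : TotalSpace.mk' F x0 (ρ x0 • e.symm x0 b) ∈ e.source := e.mem_source.2 hx
    refine (e.contMDiffAt_iff (f := fun x => TotalSpace.mk' F x (ρ x • e.symm x b)) (x₀ := x0) hsrc).2 ⟨contMDiffAt_id, ?_⟩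
    have hev : (fun x => (e (TotalSpace.mk' F x (ρ x • e.symm x b))).2)
        =ᶠ[nhds x0] fun x => ρ x • b := by
      filter_upwards [e.open_baseSet.mem_nhds hx] with x hxb
      have h1 : (e (TotalSpace.mk' F x (ρ x • e.symm x b))).2
          = ρ x • (e (TotalSpace.mk' F x (e.symm x b))).2 :=
        (e.linear ℝ hxb).map_smul (ρ x) (e.symm x b)
      rw [h1, e.apply_mk_symm hxb]
    exact ContMDiffAt.congr_of_eventuallyEq
      ((ρ.contMDiff.contMDiffAt).smul contMDiffAt_const) hev
  · have hx' : x0 ∉ tsupport ρ := fun h => hx (hρ h)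
    have hev : (fun x => TotalSpace.mk' F x (ρ x • e.symm x b))
        =ᶠ[nhds x0] Bundle.zeroSection F V := by
      filter_upwards [(isClosed_tsupport (ρ : M → ℝ)).isOpen_compl.mem_nhds hx'] with x hxc
      have : ρ x = 0 := image_eq_zero_of_notMem_tsupport hxc
      simp [Bundle.zeroSection, this]
    exact ContMDiffAt.congr_of_eventuallyEq
      ((Bundle.contMDiff_zeroSection ℝ V).contMDiffAt) hev

/-- Over a compact manifold, finitely many smooth global sections suffice to span every fiber of a
smooth complex vector bundle of finite rank. -/
theorem exists_finite_spanning_sections :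
    ∃ (n : ℕ) (s : Fin n → Cₛ^∞⟮IM; F, V⟯),
      ∀ x : M, Submodule.span ℂ (Set.range fun i => s i x) = (⊤ : Submodule ℂ (V x)) := by
  classical
  -- a finite cover of `M` by base sets of trivializations
  obtain ⟨t, ht⟩ := IsCompact.elim_finite_subcover (isCompact_univ (X := M))
    (fun x : M => (trivializationAt F V x).baseSet)
    (fun x => (trivializationAt F V x).open_baseSet)
    (fun x _ => Set.mem_iUnion.2 ⟨x, FiberBundle.mem_baseSet_trivializationAt F V x⟩)
  -- a smooth partition of unity subordinate to this cover
  obtain ⟨f, hf⟩ := SmoothPartitionOfUnity.exists_isSubordinate (ι := t) IM isClosed_univ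
    (fun i => (trivializationAt F V (i : M)).baseSet)
    (fun i => (trivializationAt F V (i : M)).open_baseSet)
    (by intro x _; obtain ⟨i, hit, hx⟩ := Set.mem_iUnion₂.1 (ht (Set.mem_univ x))
        exact Set.mem_iUnion.2 ⟨⟨i, hit⟩, hx⟩)
  -- a basis of the model fiber
  set d := Module.finrank ℂ F with hd
  set B : Module.Basis (Fin d) ℂ F := Module.finBasis ℂ F with hB
  -- the sections
  have hsec : ∀ p : t × Fin d, ContMDiff IM (IM.prod 𝓘(ℝ, F)) ∞
      (fun x => TotalSpace.mk' F x
        (f p.1 x • (trivializationAt F V (p.1 : M)).symm x (B p.2))) :=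
    fun p => aux_smooth_section (trivializationAt F V (p.1 : M)) (f p.1) (hf p.1) (B p.2)
  set g : t × Fin d → Cₛ^∞⟮IM; F, V⟯ := fun p =>
    ⟨fun x => f p.1 x • (trivializationAt F V (p.1 : M)).symm x (B p.2), hsec p⟩ with hg
  -- reindex by `Fin n`
  obtain ⟨n, eqv⟩ : ∃ n : ℕ, Nonempty ((t × Fin d) ≃ Fin n) :=
    ⟨Fintype.card (t × Fin d), ⟨Fintype.equivFin _⟩⟩
  obtain ⟨eqv⟩ := eqv
  refine ⟨n, fun i => g (eqv.symm i), fun x => ?_⟩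
  -- spanning
  obtain ⟨i, hipos⟩ := f.exists_pos_of_mem (Set.mem_univ x)
  have hxb : x ∈ (trivializationAt F V (i : M)).baseSet :=
    hf i (subset_tsupport _ (by simpa using hipos.ne'))
  set e := trivializationAt F V (i : M) with he
  -- the local frame given by the trivialization spans the fiber
  have hsp : Submodule.span ℂ
      (Set.range fun j : Fin d => (e.linearEquivAt ℂ x hxb).symm (B j)) = ⊤ := by
    have := (B.map (e.linearEquivAt ℂ x hxb).symm).span_eq
    simpa [Module.Basis.coe_map, Function.comp_def] using this
  rw [eq_top_iff, ← hsp]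
  refine Submodule.span_le.2 ?_
  rintro v ⟨j, rfl⟩
  have hmem : f i x • e.symm x (B j) ∈
      Submodule.span ℂ (Set.range fun k => g (eqv.symm k) x) :=
    Submodule.subset_span ⟨eqv (i, j), by simp [hg, he]⟩
  have hsmul : e.symm x (B j) = (f i x)⁻¹ • (f i x • e.symm x (B j)) :=
    (inv_smul_smul₀ hipos.ne' _).symm
  rw [SetLike.mem_coe]
  show e.symm x (B j) ∈ _
  rw [hsmul]
  exact Submodule.smul_of_tower_mem _ _ hmem

end
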